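/- (Lemma, charge-at-capacity region) For every time t ∈ {0,…,T−1}, if the remaining EV charging demand satisfies y_t ≥ (T−t)·v̄, then every optimal EV charging decision in the Bellman equation at time t is v_t* = v̄. -/

import Mathlib

open MeasureTheory Set

/-- NEM X payment for net consumption `z` with buy price `pp` and sell price `pm`. -/
noncomputable def NEMPayment (pp pm z : ℝ) : ℝ := pp * max z 0 - pm * max (-z) 0

/-- The superdifferential of a function `f : ℝ → ℝ` (viewed as a concave function
on `[0, ∞)`) at a point `y`. -/
def superdiff (f : ℝ → ℝ) (y : ℝ) : Set ℝ :=
  {s | ∀ z, 0 ≤ z → f z ≤ f y + s * (z - y)}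

/-- Data of the EV-charging / flexible-consumption dynamic program over horizon
`{0, …, T-1}` with `K` flexible loads, under NEM time-of-use prices. -/
structure EVModel (K T : ℕ) (Ω : Type) [MeasurableSpace Ω] where
  /-- underlying probability measure -/
  μ : Measure Ω
  prob : IsProbabilityMeasure μ
  /-- consumption upper bounds -/
  dbar : Fin K → ℝ
  dbar_pos : ∀ i, 0 < dbar i
  /-- device utility functions -/
  U : Fin K → ℝ → ℝ
  U_strictConcave : ∀ i, StrictConcaveOn ℝ (Icc 0 (dbar i)) (U i)
  U_strictMono : ∀ i, StrictMonoOn (U i) (Icc 0 (dbar i))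
  U_diff : ∀ i, ∀ x ∈ Icc 0 (dbar i), DifferentiableWithinAt ℝ (U i) (Icc 0 (dbar i)) x
  U_contDeriv : ∀ i, ContinuousOn (fun x => derivWithin (U i) (Icc 0 (dbar i)) x) (Icc 0 (dbar i))
  U_zero : ∀ i, U i 0 = 0
  /-- renewable processes -/
  r : ℕ → Ω → ℝ
  r_meas : ∀ t, Measurable (r t)
  r_nonneg : ∀ t ω, 0 ≤ r t ω
  r_int : ∀ t, Integrable (r t) μ
  r_indep : ProbabilityTheory.iIndepFun r μ
  /-- time-of-use buy prices `π_t⁺` -/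
  pip : ℕ → ℝ
  /-- time-of-use sell prices `π_t⁻` -/
  pim : ℕ → ℝ
  /-- maximal per-period EV charge -/
  vbar : ℝ
  vbar_pos : 0 < vbar
  /-- per-unit penalty for unmet EV demand at the horizon -/
  γ : ℝ
  /-- `π_off⁻ = min_t π_t⁻` -/
  pioff : ℝ
  pioff_le : ∀ t < T, pioff ≤ pim t
  pioff_attained : ∃ t < T, pioff = pim t
  /-- assumption A1 -/
  A1 : ∀ t < T, 0 < pim t ∧ pim t ≤ pip t ∧ pip t < γ

namespace EVModel

variable {K T : ℕ} {Ω : Type} [MeasurableSpace Ω]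

/-- Stage reward `g_t(x_t, v, d)`. -/
noncomputable def stage (M : EVModel K T Ω) (t : ℕ) (rt v : ℝ) (d : Fin K → ℝ) : ℝ :=
  ∑ i, M.U i (d i) - NEMPayment (M.pip t) (M.pim t) (v + ∑ i, d i - rt)

/-- Feasible decisions `(v, d)` given remaining demand `y`. -/
def feas (M : EVModel K T Ω) (y : ℝ) : Set (ℝ × (Fin K → ℝ)) :=
  {p | p.1 ∈ Icc 0 (min M.vbar y) ∧ ∀ i, p.2 i ∈ Icc 0 (M.dbar i)}

/-- Value function indexed by `k = T - 1 - t`, the number of remaining periods after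
the current one. -/
noncomputable def W (M : EVModel K T Ω) : ℕ → ℝ → ℝ → ℝ
  | 0 => fun y rt => sSup ((fun p : ℝ × (Fin K → ℝ) =>
      M.stage (T - 1) rt p.1 p.2 - M.γ * (y - p.1)) '' M.feas y)
  | (k + 1) => fun y rt => sSup ((fun p : ℝ × (Fin K → ℝ) =>
      M.stage (T - 2 - k) rt p.1 p.2 +
        ∫ ω, M.W k (y - p.1) (M.r (T - 1 - k) ω) ∂M.μ) '' M.feas y)

/-- Value function `V_t(y, r_t)` (the price argument is determined by `t`). -/
noncomputable def V (M : EVModel K T Ω) (t : ℕ) (y rt : ℝ) : ℝ := M.W (T - 1 - t) y rt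

/-- Expected value function `V̄_t(y) = E[V_t(y, r_t, π_t)]`. -/
noncomputable def Vbar (M : EVModel K T Ω) (t : ℕ) (y : ℝ) : ℝ := ∫ ω, M.V t y (M.r t ω) ∂M.μ

/-- Objective of the Bellman equation at time `t` in state `(y, rt)`. -/
noncomputable def bellObj (M : EVModel K T Ω) (t : ℕ) (y rt : ℝ) (p : ℝ × (Fin K → ℝ)) : ℝ :=
  if t = T - 1 then M.stage t rt p.1 p.2 - M.γ * (y - p.1)
  else M.stage t rt p.1 p.2 + ∫ ω, M.V (t + 1) (y - p.1) (M.r (t + 1) ω) ∂M.μ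

/-- `(v, d)` is an optimal solution of the Bellman equation at time `t`. -/
def IsBellmanOpt (M : EVModel K T Ω) (t : ℕ) (y rt : ℝ) (p : ℝ × (Fin K → ℝ)) : Prop :=
  p ∈ M.feas y ∧ ∀ q ∈ M.feas y, M.bellObj t y rt q ≤ M.bellObj t y rt p

/-- Superdifferential `h_t` of the concave expected value function `V̄_t`. -/
noncomputable def h (M : EVModel K T Ω) (t : ℕ) (y : ℝ) : Set ℝ := superdiff (M.Vbar t) y

end EVModel


lemma max_split (z : ℝ) : max z 0 = z + max (-z) 0 := by
  rcases le_total z 0 with h | h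
  · rw [max_eq_right h, max_eq_left (neg_nonneg.2 h)]; ring
  · rw [max_eq_left h, max_eq_right (neg_nonpos.2 h)]; ring

lemma nem_eq (pp pm z : ℝ) : NEMPayment pp pm z = pp * z + (pp - pm) * max (-z) 0 := by
  rw [NEMPayment, max_split]; ring

lemma nem_diff_bounds {pp pm : ℝ} (h0 : 0 ≤ pm) (h1 : pm ≤ pp) {z1 z2 : ℝ} (h : z1 ≤ z2) :
    pm * (z2 - z1) ≤ NEMPayment pp pm z2 - NEMPayment pp pm z1 ∧
    NEMPayment pp pm z2 - NEMPayment pp pm z1 ≤ pp * (z2 - z1) := by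
  have hm1 : max (-z2) 0 ≤ max (-z1) 0 := max_le_max (neg_le_neg h) le_rfl
  have hm2 : max (-z1) 0 ≤ max (-z2) 0 + (z2 - z1) := by
    refine max_le ?_ ?_
    · linarith [le_max_left (-z2) (0:ℝ)]
    · linarith [le_max_right (-z2) (0:ℝ)]
  rw [nem_eq, nem_eq]
  constructor <;> nlinarith

lemma nem_abs_le {pp pm : ℝ} (h0 : 0 ≤ pm) (h1 : pm ≤ pp) (z1 z2 : ℝ) :
    |NEMPayment pp pm z1 - NEMPayment pp pm z2| ≤ pp * |z1 - z2| := by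
  rcases le_total z1 z2 with h | h
  · obtain ⟨hl, hr⟩ := nem_diff_bounds h0 h1 h
    have ha : |z1 - z2| = z2 - z1 := by rw [abs_sub_comm]; exact abs_of_nonneg (by linarith)
    rw [ha, abs_sub_comm]
    exact abs_le.2 ⟨by nlinarith, hr⟩
  · obtain ⟨hl, hr⟩ := nem_diff_bounds h0 h1 h
    have ha : |z1 - z2| = z1 - z2 := abs_of_nonneg (by linarith)
    rw [ha]
    exact abs_le.2 ⟨by nlinarith, hr⟩

lemma csSup_image_le_add {α : Type*} {S : Set α} (hS : S.Nonempty)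
    {f g : α → ℝ} {c : ℝ} (hbdd : BddAbove (g '' S))
    (h : ∀ p ∈ S, f p ≤ g p + c) : sSup (f '' S) ≤ sSup (g '' S) + c := by
  refine csSup_le (hS.image f) ?_
  rintro x ⟨p, hp, rfl⟩
  exact (h p hp).trans ((add_le_add_iff_right c).2 (le_csSup hbdd ⟨p, hp, rfl⟩))

lemma csSup_image_shift {α : Type*} {S : Set α} (hS : S.Nonempty)
    {f g : α → ℝ} {c : ℝ} (hbdd : BddAbove (g '' S))
    (h : ∀ p ∈ S, f p = g p + c) : sSup (f '' S) = sSup (g '' S) + c := by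
  obtain ⟨B, hB⟩ := hbdd
  have hbf : BddAbove (f '' S) := ⟨B + c, by
    rintro x ⟨p, hp, rfl⟩
    exact (h p hp).le.trans ((add_le_add_iff_right c).2 (hB ⟨p, hp, rfl⟩))⟩
  refine le_antisymm (csSup_image_le_add hS ⟨B, hB⟩ fun p hp => (h p hp).le) ?_
  have h2 := csSup_image_le_add hS hbf (f := g) (g := f) (c := -c)
    (fun p hp => by linarith [h p hp])
  linarith

namespace EVModel

variable {K T : ℕ} {Ω : Type} [MeasurableSpace Ω]

lemma gamma_pos (M : EVModel K T Ω) (hT : 0 < T) : 0 < M.γ := by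
  obtain ⟨h1, h2, h3⟩ := M.A1 0 hT; linarith

lemma feas_nonempty (M : EVModel K T Ω) {y : ℝ} (hy : 0 ≤ y) : (M.feas y).Nonempty :=
  ⟨(0, fun _ => 0), ⟨⟨le_refl 0, le_min M.vbar_pos.le hy⟩,
    fun i => ⟨le_refl 0, (M.dbar_pos i).le⟩⟩⟩

lemma feas_congr (M : EVModel K T Ω) {y1 y2 : ℝ} (h1 : M.vbar ≤ y1) (h2 : M.vbar ≤ y2) :
    M.feas y1 = M.feas y2 := by
  unfold feas; rw [min_eq_left h1, min_eq_left h2]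

lemma mem_feas (M : EVModel K T Ω) {y : ℝ} {p : ℝ × (Fin K → ℝ)} (hp : p ∈ M.feas y) :
    0 ≤ p.1 ∧ p.1 ≤ M.vbar ∧ p.1 ≤ y ∧ ∀ i, 0 ≤ p.2 i ∧ p.2 i ≤ M.dbar i :=
  ⟨hp.1.1, (hp.1.2).trans (min_le_left _ _), (hp.1.2).trans (min_le_right _ _),
   fun i => ⟨(hp.2 i).1, (hp.2 i).2⟩⟩

lemma stage_le (M : EVModel K T Ω) {t : ℕ} (ht : t < T) {y : ℝ} (r : ℝ)
    {p : ℝ × (Fin K → ℝ)} (hp : p ∈ M.feas y) :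
    M.stage t r p.1 p.2 ≤ (∑ i, M.U i (M.dbar i)) + M.γ * max r 0 := by
  obtain ⟨hv0, hvb, hvy, hd⟩ := M.mem_feas hp
  obtain ⟨hpm, hmp, hpγ⟩ := M.A1 t ht
  have hdsum : 0 ≤ ∑ i, p.2 i := Finset.sum_nonneg fun i _ => (hd i).1
  have hU : ∑ i, M.U i (p.2 i) ≤ ∑ i, M.U i (M.dbar i) := by
    refine Finset.sum_le_sum fun i _ => ?_
    exact (M.U_strictMono i).monotoneOn ⟨(hd i).1, (hd i).2⟩
      ⟨(M.dbar_pos i).le, le_rfl⟩ (hd i).2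
  have hmz : max (-(p.1 + ∑ i, p.2 i - r)) 0 ≤ max r 0 :=
    max_le ((by linarith : -(p.1 + ∑ i, p.2 i - r) ≤ r).trans (le_max_left r 0))
      (le_max_right r 0)
  have h1 : (0:ℝ) ≤ max (p.1 + ∑ i, p.2 i - r) 0 := le_max_right _ 0
  have h2 : (0:ℝ) ≤ max (-(p.1 + ∑ i, p.2 i - r)) 0 := le_max_right _ 0
  have h3 : (0:ℝ) ≤ max r 0 := le_max_right _ 0
  have h4 : M.pim t * max (-(p.1 + ∑ i, p.2 i - r)) 0 ≤ M.γ * max r 0 := by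
    calc M.pim t * max (-(p.1 + ∑ i, p.2 i - r)) 0 ≤ M.pim t * max r 0 :=
          mul_le_mul_of_nonneg_left hmz hpm.le
      _ ≤ M.γ * max r 0 := mul_le_mul_of_nonneg_right (by linarith) h3
  have h5 : (0:ℝ) ≤ M.pip t * max (p.1 + ∑ i, p.2 i - r) 0 :=
    mul_nonneg (by linarith) h1
  simp only [stage, NEMPayment]
  linarith

lemma stage_abs_sub (M : EVModel K T Ω) {t : ℕ} (ht : t < T) (r1 r2 v : ℝ) (d : Fin K → ℝ) :
    |M.stage t r1 v d - M.stage t r2 v d| ≤ M.γ * |r1 - r2| := by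
  obtain ⟨hpm, hmp, hpγ⟩ := M.A1 t ht
  have h := nem_abs_le hpm.le hmp (v + ∑ i, d i - r2) (v + ∑ i, d i - r1)
  have he : (v + ∑ i, d i - r2) - (v + ∑ i, d i - r1) = r1 - r2 := by ring
  rw [he] at h
  have hgoal : M.stage t r1 v d - M.stage t r2 v d =
      NEMPayment (M.pip t) (M.pim t) (v + ∑ i, d i - r2) -
      NEMPayment (M.pip t) (M.pim t) (v + ∑ i, d i - r1) := by
    simp only [stage]; ring
  rw [hgoal]
  calc |_| ≤ M.pip t * |r1 - r2| := h
    _ ≤ M.γ * |r1 - r2| := mul_le_mul_of_nonneg_right hpγ.le (abs_nonneg _)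

lemma integrable_of_lip (M : EVModel K T Ω) (hγ : 0 < M.γ) {f : ℝ → ℝ}
    (hlip : ∀ r1 r2 : ℝ, |f r1 - f r2| ≤ M.γ * |r1 - r2|) (s : ℕ) :
    Integrable (fun ω => f (M.r s ω)) M.μ := by
  haveI := M.prob
  have hlipf : LipschitzWith ⟨M.γ, hγ.le⟩ f := by
    apply LipschitzWith.of_dist_le_mul
    intro a b
    rw [Real.dist_eq, Real.dist_eq]
    exact hlip a b
  refine Integrable.mono'
    ((integrable_const (|f 0|)).add ((M.r_int s).const_mul M.γ))
    ((hlipf.continuous.measurable.comp (M.r_meas s)).aestronglyMeasurable) ?_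
  refine Filter.Eventually.of_forall fun ω => ?_
  have h1 := hlip (M.r s ω) 0
  have h2 := M.r_nonneg s ω
  rw [sub_zero, abs_of_nonneg h2] at h1
  have h3 := abs_sub_abs_le_abs_sub (f (M.r s ω)) (f 0)
  simp only [Pi.add_apply, Real.norm_eq_abs]
  linarith

end EVModel

namespace EVModel

variable {K T : ℕ} {Ω : Type} [MeasurableSpace Ω]

lemma Wkey (M : EVModel K T Ω) (hT : 0 < T) (k : ℕ) :
    (∃ A : ℝ, ∀ y : ℝ, 0 ≤ y → ∀ r : ℝ, M.W k y r ≤ A + M.γ * max r 0) ∧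
    (∀ y : ℝ, 0 ≤ y → ∀ r1 r2 : ℝ, |M.W k y r1 - M.W k y r2| ≤ M.γ * |r1 - r2|) ∧
    (∀ y1 y2 : ℝ, ((k : ℝ) + 1) * M.vbar ≤ y1 → ((k : ℝ) + 1) * M.vbar ≤ y2 →
      ∀ r : ℝ, M.W k y1 r + M.γ * y1 = M.W k y2 r + M.γ * y2) := by
  have hγ := M.gamma_pos hT
  haveI := M.prob
  induction k with
  | zero =>
    have htT : T - 1 < T := by omega
    have hW : ∀ y r : ℝ, M.W 0 y r = sSup ((fun p : ℝ × (Fin K → ℝ) =>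
        M.stage (T-1) r p.1 p.2 - M.γ * (y - p.1)) '' M.feas y) := fun _ _ => rfl
    have hble : ∀ (y : ℝ), 0 ≤ y → ∀ (r : ℝ), ∀ p ∈ M.feas y,
        M.stage (T-1) r p.1 p.2 - M.γ * (y - p.1) ≤
          ((∑ i, M.U i (M.dbar i)) + M.γ * M.vbar) + M.γ * max r 0 := by
      intro y hy r p hp
      obtain ⟨hv0, hvb, hvy, hd⟩ := M.mem_feas hp
      have h := M.stage_le htT r hp
      nlinarith
    have hbdd : ∀ (y : ℝ), 0 ≤ y → ∀ (r : ℝ), BddAbove ((fun p : ℝ × (Fin K → ℝ) =>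
        M.stage (T-1) r p.1 p.2 - M.γ * (y - p.1)) '' M.feas y) := by
      intro y hy r
      exact ⟨_, by rintro x ⟨p, hp, rfl⟩; exact hble y hy r p hp⟩
    refine ⟨⟨(∑ i, M.U i (M.dbar i)) + M.γ * M.vbar, ?_⟩, ?_, ?_⟩
    · intro y hy r
      rw [hW]
      exact csSup_le ((M.feas_nonempty hy).image _)
        (by rintro x ⟨p, hp, rfl⟩; exact hble y hy r p hp)
    · intro y hy r1 r2
      have key : ∀ ra rb : ℝ,
          sSup ((fun p : ℝ × (Fin K → ℝ) =>
            M.stage (T-1) ra p.1 p.2 - M.γ * (y - p.1)) '' M.feas y) ≤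
          sSup ((fun p : ℝ × (Fin K → ℝ) =>
            M.stage (T-1) rb p.1 p.2 - M.γ * (y - p.1)) '' M.feas y) + M.γ * |ra - rb| := by
        intro ra rb
        refine csSup_image_le_add (M.feas_nonempty hy) (hbdd y hy rb) ?_
        intro p hp
        have h := (abs_le.1 (M.stage_abs_sub htT ra rb p.1 p.2)).2
        linarith
      have h1 := key r1 r2
      have h2 := key r2 r1
      rw [abs_sub_comm r2 r1] at h2
      rw [hW, hW, abs_sub_le_iff]
      exact ⟨by linarith, by linarith⟩
    · intro y1 y2 hy1 hy2 r
      push_cast at hy1 hy2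
      have hv1 : M.vbar ≤ y1 := by linarith
      have hv2 : M.vbar ≤ y2 := by linarith
      have hy20 : (0:ℝ) ≤ y2 := le_trans M.vbar_pos.le hv2
      rw [hW, hW, M.feas_congr hv1 hv2]
      have hs := csSup_image_shift (M.feas_nonempty hy20) (hbdd y2 hy20 r)
        (f := fun p : ℝ × (Fin K → ℝ) => M.stage (T-1) r p.1 p.2 - M.γ * (y1 - p.1))
        (g := fun p : ℝ × (Fin K → ℝ) => M.stage (T-1) r p.1 p.2 - M.γ * (y2 - p.1))
        (c := M.γ * (y2 - y1)) (fun p _ => by ring)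
      rw [hs]; ring
  | succ k ih =>
    obtain ⟨⟨A, hA⟩, hlip, hsh⟩ := ih
    have ht0 : T - 2 - k < T := by omega
    have hW : ∀ y r : ℝ, M.W (k+1) y r = sSup ((fun p : ℝ × (Fin K → ℝ) =>
        M.stage (T - 2 - k) r p.1 p.2 +
          ∫ ω, M.W k (y - p.1) (M.r (T - 1 - k) ω) ∂M.μ) '' M.feas y) := fun _ _ => rfl
    have hint : ∀ (y' : ℝ), 0 ≤ y' → ∀ s : ℕ,
        Integrable (fun ω => M.W k y' (M.r s ω)) M.μ := fun y' hy' s =>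
      M.integrable_of_lip hγ (fun r1 r2 => hlip y' hy' r1 r2) s
    set R : ℝ := ∫ ω, M.r (T - 1 - k) ω ∂M.μ with hR
    have hIbound : ∀ (y : ℝ), 0 ≤ y → ∀ p ∈ M.feas y,
        (∫ ω, M.W k (y - p.1) (M.r (T - 1 - k) ω) ∂M.μ) ≤ A + M.γ * R := by
      intro y hy p hp
      obtain ⟨hv0, hvb, hvy, hd⟩ := M.mem_feas hp
      have hy' : 0 ≤ y - p.1 := by linarith
      have hig : Integrable (fun ω => A + M.γ * M.r (T - 1 - k) ω) M.μ :=
        (integrable_const A).add ((M.r_int _).const_mul M.γ)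
      have hmono := integral_mono (hint _ hy' (T - 1 - k)) hig (fun ω => by
        have h := hA (y - p.1) hy' (M.r (T - 1 - k) ω)
        rw [max_eq_left (M.r_nonneg _ ω)] at h
        exact h)
      have heval : ∫ ω, (A + M.γ * M.r (T - 1 - k) ω) ∂M.μ = A + M.γ * R := by
        rw [integral_add (integrable_const A) ((M.r_int _).const_mul M.γ),
          integral_const, integral_const_mul]
        simp [hR]
      linarith [hmono, heval.le, heval.ge]
    have hble : ∀ (y : ℝ), 0 ≤ y → ∀ (r : ℝ), ∀ p ∈ M.feas y,
        M.stage (T - 2 - k) r p.1 p.2 + (∫ ω, M.W k (y - p.1) (M.r (T - 1 - k) ω) ∂M.μ) ≤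
          ((∑ i, M.U i (M.dbar i)) + (A + M.γ * R)) + M.γ * max r 0 := by
      intro y hy r p hp
      have h1 := M.stage_le ht0 r hp
      have h2 := hIbound y hy p hp
      linarith
    have hbdd : ∀ (y : ℝ), 0 ≤ y → ∀ (r : ℝ), BddAbove ((fun p : ℝ × (Fin K → ℝ) =>
        M.stage (T - 2 - k) r p.1 p.2 +
          ∫ ω, M.W k (y - p.1) (M.r (T - 1 - k) ω) ∂M.μ) '' M.feas y) := by
      intro y hy r
      exact ⟨_, by rintro x ⟨p, hp, rfl⟩; exact hble y hy r p hp⟩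
    refine ⟨⟨(∑ i, M.U i (M.dbar i)) + (A + M.γ * R), ?_⟩, ?_, ?_⟩
    · intro y hy r
      rw [hW]
      exact csSup_le ((M.feas_nonempty hy).image _)
        (by rintro x ⟨p, hp, rfl⟩; exact hble y hy r p hp)
    · intro y hy r1 r2
      have key : ∀ ra rb : ℝ,
          sSup ((fun p : ℝ × (Fin K → ℝ) => M.stage (T - 2 - k) ra p.1 p.2 +
            ∫ ω, M.W k (y - p.1) (M.r (T - 1 - k) ω) ∂M.μ) '' M.feas y) ≤
          sSup ((fun p : ℝ × (Fin K → ℝ) => M.stage (T - 2 - k) rb p.1 p.2 +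
            ∫ ω, M.W k (y - p.1) (M.r (T - 1 - k) ω) ∂M.μ) '' M.feas y) + M.γ * |ra - rb| := by
        intro ra rb
        refine csSup_image_le_add (M.feas_nonempty hy) (hbdd y hy rb) ?_
        intro p hp
        have h := (abs_le.1 (M.stage_abs_sub ht0 ra rb p.1 p.2)).2
        linarith
      have h1 := key r1 r2
      have h2 := key r2 r1
      rw [abs_sub_comm r2 r1] at h2
      rw [hW, hW, abs_sub_le_iff]
      exact ⟨by linarith, by linarith⟩
    · intro y1 y2 hy1 hy2 r
      push_cast at hy1 hy2
      have hk0 : (0:ℝ) ≤ (k : ℝ) := Nat.cast_nonneg k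
      have hv1 : M.vbar ≤ y1 := by nlinarith [M.vbar_pos]
      have hv2 : M.vbar ≤ y2 := by nlinarith [M.vbar_pos]
      have hy20 : (0:ℝ) ≤ y2 := le_trans M.vbar_pos.le hv2
      rw [hW, hW, M.feas_congr hv1 hv2]
      have hs := csSup_image_shift (M.feas_nonempty hy20) (hbdd y2 hy20 r)
        (f := fun p : ℝ × (Fin K → ℝ) => M.stage (T - 2 - k) r p.1 p.2 +
          ∫ ω, M.W k (y1 - p.1) (M.r (T - 1 - k) ω) ∂M.μ)
        (g := fun p : ℝ × (Fin K → ℝ) => M.stage (T - 2 - k) r p.1 p.2 +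
          ∫ ω, M.W k (y2 - p.1) (M.r (T - 1 - k) ω) ∂M.μ)
        (c := M.γ * (y2 - y1)) ?_
      · rw [hs]; ring
      · intro p hp
        obtain ⟨hv0, hvb, hvy, hd⟩ := M.mem_feas hp
        have hs1 : ((k:ℝ) + 1) * M.vbar ≤ y1 - p.1 := by nlinarith
        have hs2 : ((k:ℝ) + 1) * M.vbar ≤ y2 - p.1 := by nlinarith
        have hy2' : (0:ℝ) ≤ y2 - p.1 := by nlinarith [M.vbar_pos]
        have hcongr : ∫ ω, M.W k (y1 - p.1) (M.r (T - 1 - k) ω) ∂M.μ =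
            ∫ ω, (M.W k (y2 - p.1) (M.r (T - 1 - k) ω) + M.γ * (y2 - y1)) ∂M.μ :=
          integral_congr_ae (Filter.Eventually.of_forall fun ω => by
            have h := hsh (y1 - p.1) (y2 - p.1) hs1 hs2 (M.r (T - 1 - k) ω)
            linear_combination h)
        have hadd : ∫ ω, (M.W k (y2 - p.1) (M.r (T - 1 - k) ω) + M.γ * (y2 - y1)) ∂M.μ =
            (∫ ω, M.W k (y2 - p.1) (M.r (T - 1 - k) ω) ∂M.μ) + M.γ * (y2 - y1) := by
          rw [integral_add (hint _ hy2' _) (integrable_const _), integral_const]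
          simp
        rw [hcongr, hadd]
        ring

lemma Wint (M : EVModel K T Ω) (hT : 0 < T) (k s : ℕ) {y : ℝ} (hy : 0 ≤ y) :
    Integrable (fun ω => M.W k y (M.r s ω)) M.μ :=
  M.integrable_of_lip (M.gamma_pos hT) (fun r1 r2 => (M.Wkey hT k).2.1 y hy r1 r2) s

end EVModel

/-- **Lemma (charge-at-capacity region).**
For every `t ∈ {0, …, T-1}`, if the remaining EV charging demand satisfies
`y ≥ (T - t) v̄`, then every optimal EV charging decision in the Bellman equation
at time `t` is `v* = v̄`. -/
theorem charge_at_capacity (K T : ℕ) (Ω : Type) [MeasurableSpace Ω]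
    (M : EVModel K T Ω) (t : ℕ) (ht : t < T) (rt : ℝ) (hrt : 0 ≤ rt)
    (y : ℝ) (hy : ((T - t : ℕ) : ℝ) * M.vbar ≤ y)
    (p : ℝ × (Fin K → ℝ)) (hp : M.IsBellmanOpt t y rt p) :
    p.1 = M.vbar := by
  classical
  haveI := M.prob
  have hT : 0 < T := lt_of_le_of_lt (Nat.zero_le t) ht
  have hγ := M.gamma_pos hT
  obtain ⟨hpm, hmp, hpγ⟩ := M.A1 t ht
  obtain ⟨hpfeas, hopt⟩ := hp
  obtain ⟨hv0, hvb, hvy, hd⟩ := M.mem_feas hpfeas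
  by_contra hne
  have hvlt : p.1 < M.vbar := lt_of_le_of_ne hvb hne
  have hTt1 : (1:ℝ) ≤ ((T - t : ℕ) : ℝ) := by
    have h1 : 1 ≤ T - t := by omega
    exact_mod_cast h1
  have hvbary : M.vbar ≤ y := by nlinarith [M.vbar_pos]
  have hy0 : (0:ℝ) ≤ y := le_trans M.vbar_pos.le hvbary
  have hqfeas : (M.vbar, p.2) ∈ M.feas y :=
    ⟨⟨M.vbar_pos.le, le_min le_rfl hvbary⟩, fun i => hpfeas.2 i⟩
  have hle := hopt (M.vbar, p.2) hqfeas
  have hz : p.1 + ∑ i, p.2 i - rt ≤ M.vbar + ∑ i, p.2 i - rt := by linarith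
  have hnd := (nem_diff_bounds hpm.le hmp hz).2
  have hz2z1 : (M.vbar + ∑ i, p.2 i - rt) - (p.1 + ∑ i, p.2 i - rt) = M.vbar - p.1 := by ring
  rw [hz2z1] at hnd
  have hstagediff : M.stage t rt p.1 p.2 - M.stage t rt M.vbar p.2 ≤
      M.pip t * (M.vbar - p.1) := by
    simp only [EVModel.stage]
    linarith
  have hprod : 0 < (M.γ - M.pip t) * (M.vbar - p.1) :=
    mul_pos (by linarith) (by linarith)
  rcases eq_or_ne t (T - 1) with hcase | hcase
  · simp only [EVModel.bellObj, if_pos hcase] at hle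
    nlinarith [hle, hstagediff, hprod]
  · have ht2 : t + 2 ≤ T := by omega
    simp only [EVModel.bellObj, if_neg hcase, EVModel.V] at hle
    have hk : T - 1 - (t + 1) = T - 2 - t := by omega
    rw [hk] at hle
    obtain ⟨_, hlip, hsh⟩ := M.Wkey hT (T - 2 - t)
    have hc : ((T - 2 - t : ℕ) : ℝ) + 2 = ((T - t : ℕ) : ℝ) := by
      have h1 : (T - 2 - t) + 2 = T - t := by omega
      exact_mod_cast h1
    rw [← hc] at hy
    have hs1 : (((T - 2 - t : ℕ) : ℝ) + 1) * M.vbar ≤ y - M.vbar := by nlinarith [M.vbar_pos]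
    have hs2 : (((T - 2 - t : ℕ) : ℝ) + 1) * M.vbar ≤ y - p.1 := by nlinarith [M.vbar_pos]
    have hy1' : (0:ℝ) ≤ y - p.1 := by linarith
    have hintp := M.Wint hT (T - 2 - t) (t + 1) hy1'
    have hshp := hsh (y - M.vbar) (y - p.1) hs1 hs2
    have hIeq : (∫ ω, M.W (T - 2 - t) (y - M.vbar) (M.r (t + 1) ω) ∂M.μ) =
        (∫ ω, M.W (T - 2 - t) (y - p.1) (M.r (t + 1) ω) ∂M.μ) + M.γ * (M.vbar - p.1) := by
      have h1 : (∫ ω, M.W (T - 2 - t) (y - M.vbar) (M.r (t + 1) ω) ∂M.μ) =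
          ∫ ω, (M.W (T - 2 - t) (y - p.1) (M.r (t + 1) ω) + M.γ * (M.vbar - p.1)) ∂M.μ :=
        integral_congr_ae (Filter.Eventually.of_forall fun ω => by
          linear_combination hshp (M.r (t + 1) ω))
      rw [h1, integral_add hintp (integrable_const _), integral_const]
      simp
    nlinarith [hle, hstagediff, hIeq.le, hIeq.ge, hprod]
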